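/- (Ranking-Matching Lemma) For any election E = (V, C, σ), where σ assigns to each voter i ∈ V a linear order σ_i over C, and for any weight vectors p ∈ Δ(V) and q ∈ Δ(C), there exists a candidate a ∈ C such that for every subset S ⊆ V, the total q-weight of the set of candidates weakly defeated by a in at least one vote of S is at least p(S). Formally: ∃ a ∈ C, ∀ S ⊆ V, q({c ∈ C : ∃ i ∈ S, a ⪰_i c}) ≥ p(S). -/

import Mathlib

open Classical Finset

private lemma exists_worst {C : Type*} (r : C → C → Prop) (h : IsStrictTotalOrder C r) :
    ∀ D : Finset C, D.Nonempty → ∃ w ∈ D, ∀ b ∈ D, b = w ∨ r b w := by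
  intro D
  induction D using Finset.induction_on with
  | empty => intro h'; exact absurd h' (by simp)
  | insert a s hna ih =>
    intro _
    rcases s.eq_empty_or_nonempty with rfl | hs
    · exact ⟨a, by simp, by simp⟩
    · obtain ⟨w, hwmem, hw⟩ := ih hs
      rcases (by have := h.trichotomous a w; tauto : r a w ∨ a = w ∨ r w a) with haw | haw | hwa
      · refine ⟨w, Finset.mem_insert_of_mem hwmem, ?_⟩
        intro b hb
        rcases Finset.mem_insert.1 hb with rfl | hb
        · exact Or.inr haw
        · exact hw b hb
      · refine ⟨w, Finset.mem_insert_of_mem hwmem, ?_⟩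
        intro b hb
        rcases Finset.mem_insert.1 hb with rfl | hb
        · exact Or.inl haw
        · exact hw b hb
      · refine ⟨a, Finset.mem_insert_self a s, ?_⟩
        intro b hb
        rcases Finset.mem_insert.1 hb with rfl | hb
        · exact Or.inl rfl
        · rcases hw b hb with rfl | hbw
          · exact Or.inr hwa
          · exact Or.inr (h.trans _ _ _ hbw hwa)

private lemma aux {V C : Type*} [Fintype V] [Fintype C]
    (σ : V → C → C → Prop) (hσ : ∀ i, IsStrictTotalOrder C (σ i))
    (p : V → ℝ) (hp0 : ∀ i, 0 ≤ p i) (hp1 : ∑ i, p i = 1) :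
    ∀ D : Finset C, D.Nonempty → ∀ q : C → ℝ, (∀ c ∈ D, 0 ≤ q c) →
    ∃ a ∈ D, ∃ x : V → C → ℝ,
      (∀ i c, 0 ≤ x i c) ∧
      (∀ i c, c ∉ D → x i c = 0) ∧
      (∀ i, ∑ c ∈ D, x i c = (∑ c ∈ D, q c) * p i) ∧
      (∀ c ∈ D, ∑ i, x i c = q c) ∧
      (∀ i c, x i c ≠ 0 → a = c ∨ σ i a c) := by
  intro D
  induction D using Finset.strongInductionOn with
  | _ D IH =>
  intro hD q hq
  choose w hwmem hw using fun i => exists_worst (σ i) (hσ i) D hD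
  set T := ∑ c ∈ D, q c with hT
  set r : C → ℝ := fun c => ∑ i ∈ univ.filter (fun i => w i = c), p i with hrdef
  have hr0 : ∀ c, 0 ≤ r c := fun c => Finset.sum_nonneg (fun i _ => hp0 i)
  have hrsum : ∑ c ∈ D, r c = 1 := by
    rw [← hp1]
    exact Finset.sum_fiberwise_of_maps_to (fun i _ => hwmem i) p
  have hT0 : 0 ≤ T := Finset.sum_nonneg hq
  set E := D.filter (fun c => 0 < r c) with hE
  have hEne : E.Nonempty := by
    by_contra h
    rw [Finset.not_nonempty_iff_eq_empty] at h
    have hz : ∑ c ∈ D, r c = 0 := by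
      refine Finset.sum_eq_zero (fun c hc => ?_)
      by_contra hc0
      have h1 : 0 < r c := lt_of_le_of_ne (hr0 c) (Ne.symm hc0)
      have h2 : c ∈ E := Finset.mem_filter.2 ⟨hc, h1⟩
      simp [h] at h2
    rw [hrsum] at hz; norm_num at hz
  obtain ⟨c₀, hc₀E, hc₀min⟩ := Finset.exists_min_image E (fun c => q c / r c) hEne
  have hc₀D : c₀ ∈ D := (Finset.mem_filter.1 hc₀E).1
  have hrc₀ : 0 < r c₀ := (Finset.mem_filter.1 hc₀E).2
  set δ := q c₀ / r c₀ with hδ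
  have hδ0 : 0 ≤ δ := div_nonneg (hq c₀ hc₀D) (hr0 c₀)
  have hkey : ∀ c ∈ D, r c * δ ≤ q c := by
    intro c hc
    rcases eq_or_lt_of_le (hr0 c) with h0 | hpos
    · rw [← h0]; simpa using hq c hc
    · have hcE : c ∈ E := Finset.mem_filter.2 ⟨hc, hpos⟩
      have hmin := hc₀min c hcE
      calc r c * δ ≤ r c * (q c / r c) := mul_le_mul_of_nonneg_left hmin (hr0 c)
        _ = q c := by field_simp
  have hc₀eq : r c₀ * δ = q c₀ := by
    rw [hδ]; field_simp
  by_cases hA : ∀ c ∈ D, q c = r c * T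
  · refine ⟨c₀, hc₀D, fun i c => if w i = c then T * p i else 0, ?_, ?_, ?_, ?_, ?_⟩
    · intro i c
      dsimp only
      split
      · exact mul_nonneg hT0 (hp0 i)
      · exact le_rfl
    · intro i c hc
      have : w i ≠ c := fun h => hc (h ▸ hwmem i)
      simp [this]
    · intro i
      dsimp only
      rw [Finset.sum_ite_eq D (w i) (fun _ => T * p i)]
      simp [hwmem i]
    · intro c hc
      dsimp only
      have h1 : ∑ i, (if w i = c then T * p i else 0)
          = ∑ i ∈ univ.filter (fun i => w i = c), T * p i := (Finset.sum_filter _ _).symm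
      rw [h1, ← Finset.mul_sum]
      have hrc : ∑ i ∈ univ.filter (fun i => w i = c), p i = r c := rfl
      rw [hrc]
      linarith [hA c hc]
    · intro i c hx
      have hwc : w i = c := by
        by_contra h; simp [h] at hx
      rcases hw i c₀ hc₀D with h | h
      · exact Or.inl (h.trans hwc)
      · exact Or.inr (hwc ▸ h)
  · have hδT : δ < T := by
      by_contra hle
      push_neg at hle
      apply hA
      intro c hc
      have h1 : ∀ c ∈ D, 0 ≤ q c - r c * T := by
        intro c hc
        have h2 := hkey c hc
        have h3 : r c * T ≤ r c * δ := mul_le_mul_of_nonneg_left hle (hr0 c)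
        linarith
      have h2 : ∑ c ∈ D, (q c - r c * T) = 0 := by
        rw [Finset.sum_sub_distrib, ← Finset.sum_mul, hrsum, one_mul, ← hT]
        ring
      have h3 := (Finset.sum_eq_zero_iff_of_nonneg h1).1 h2 c hc
      linarith
    have hD' : (D.erase c₀).Nonempty := by
      by_contra h
      rw [Finset.not_nonempty_iff_eq_empty, Finset.erase_eq_empty_iff] at h
      rcases h with h | h
      · exact absurd h (Finset.nonempty_iff_ne_empty.1 hD)
      · apply hA
        intro c hc
        rw [h, Finset.mem_singleton] at hc
        subst hc
        have hT' : T = q c := by rw [hT, h, Finset.sum_singleton]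
        have hr' : r c = 1 := by rw [← hrsum, h, Finset.sum_singleton]
        rw [hr', hT', one_mul]
    set q' : C → ℝ := fun c => q c - r c * δ with hq'def
    have hq'0 : ∀ c ∈ D.erase c₀, 0 ≤ q' c := by
      intro c hc
      have := hkey c (Finset.mem_of_mem_erase hc)
      simp only [hq'def]
      linarith
    obtain ⟨a, haD', x', hx'0, hx'z, hx'row, hx'col, hx'sup⟩ :=
      IH (D.erase c₀) (Finset.erase_ssubset hc₀D) hD' q' hq'0
    have hq'c₀ : q' c₀ = 0 := by
      simp only [hq'def]
      linarith [hc₀eq]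
    have hx'c₀ : ∀ i, x' i c₀ = 0 := fun i => hx'z i c₀ (Finset.notMem_erase c₀ D)
    have hsum' : ∑ c ∈ D.erase c₀, q' c = T - δ := by
      have h1 : ∑ c ∈ D.erase c₀, q' c + q' c₀ = ∑ c ∈ D, q' c :=
        Finset.sum_erase_add D _ hc₀D
      have h2 : ∑ c ∈ D, q' c = T - δ := by
        simp only [hq'def]
        rw [Finset.sum_sub_distrib, ← Finset.sum_mul, hrsum, one_mul, ← hT]
      linarith
    refine ⟨a, Finset.mem_of_mem_erase haD',
      fun i c => (if w i = c then δ * p i else 0) + x' i c, ?_, ?_, ?_, ?_, ?_⟩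
    · intro i c
      dsimp only
      apply add_nonneg _ (hx'0 i c)
      split
      · exact mul_nonneg hδ0 (hp0 i)
      · exact le_rfl
    · intro i c hc
      have h1 : w i ≠ c := fun h => hc (h ▸ hwmem i)
      have h2 : x' i c = 0 := hx'z i c (fun h => hc (Finset.mem_of_mem_erase h))
      simp [h1, h2]
    · intro i
      dsimp only
      rw [Finset.sum_add_distrib]
      have h1 : ∑ c ∈ D, (if w i = c then δ * p i else 0) = δ * p i := by
        rw [Finset.sum_ite_eq D (w i) (fun _ => δ * p i)]
        simp [hwmem i]
      have h2 : ∑ c ∈ D, x' i c = (T - δ) * p i := by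
        have h3 : ∑ c ∈ D.erase c₀, x' i c + x' i c₀ = ∑ c ∈ D, x' i c :=
          Finset.sum_erase_add D _ hc₀D
        rw [← h3, hx'c₀ i, add_zero, hx'row i, hsum']
      rw [h1, h2]
      ring
    · intro c hc
      dsimp only
      rw [Finset.sum_add_distrib]
      have h1 : ∑ i, (if w i = c then δ * p i else 0)
          = ∑ i ∈ univ.filter (fun i => w i = c), δ * p i := (Finset.sum_filter _ _).symm
      rw [h1, ← Finset.mul_sum]
      have hrc : ∑ i ∈ univ.filter (fun i => w i = c), p i = r c := rfl
      rw [hrc]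
      by_cases hcc : c = c₀
      · subst hcc
        have h2 : ∑ i, x' i c = 0 := Finset.sum_eq_zero (fun i _ => hx'c₀ i)
        rw [h2, add_zero]
        linarith [hc₀eq]
      · have hce : c ∈ D.erase c₀ := Finset.mem_erase.2 ⟨hcc, hc⟩
        rw [hx'col c hce]
        simp only [hq'def]
        ring
    · intro i c hx
      by_cases hwc : w i = c
      · rcases hw i a (Finset.mem_of_mem_erase haD') with h | h
        · exact Or.inl (by rw [h, hwc])
        · exact Or.inr (hwc ▸ h)
      · have h1 : x' i c ≠ 0 := by
          intro h; simp [hwc, h] at hx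
        exact hx'sup i c h1

open Classical in
/-- Ranking-Matching Lemma. -/
theorem stmt1 {V C : Type*} [Fintype V] [Fintype C] [Nonempty V] [Nonempty C]
    (σ : V → C → C → Prop) (hσ : ∀ i, IsStrictTotalOrder C (σ i))
    (p : V → ℝ) (q : C → ℝ)
    (hp0 : ∀ i, 0 ≤ p i) (hq0 : ∀ c, 0 ≤ q c)
    (hp1 : ∑ i, p i = 1) (hq1 : ∑ c, q c = 1) :
    ∃ a : C, ∀ S : Finset V,
      ∑ i ∈ S, p i ≤
        ∑ c ∈ Finset.univ.filter (fun c => ∃ i ∈ S, a = c ∨ σ i a c), q c := by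
  obtain ⟨a, -, x, hx0, hxz, hxrow, hxcol, hxsup⟩ :=
    aux σ hσ p hp0 hp1 Finset.univ Finset.univ_nonempty q (fun c _ => hq0 c)
  refine ⟨a, fun S => ?_⟩
  have hrow : ∀ i, ∑ c, x i c = p i := by
    intro i
    rw [hxrow i, hq1, one_mul]
  calc ∑ i ∈ S, p i = ∑ i ∈ S, ∑ c, x i c := by
        exact Finset.sum_congr rfl (fun i _ => (hrow i).symm)
    _ = ∑ c, ∑ i ∈ S, x i c := Finset.sum_comm
    _ = ∑ c ∈ Finset.univ.filter (fun c => ∃ i ∈ S, a = c ∨ σ i a c), ∑ i ∈ S, x i c := by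
        refine (Finset.sum_subset (Finset.filter_subset _ _) ?_).symm
        intro c _ hc
        refine Finset.sum_eq_zero fun i hi => ?_
        by_contra hne
        exact hc (Finset.mem_filter.2 ⟨Finset.mem_univ c, ⟨i, hi, hxsup i c hne⟩⟩)
    _ ≤ ∑ c ∈ Finset.univ.filter (fun c => ∃ i ∈ S, a = c ∨ σ i a c), q c := by
        refine Finset.sum_le_sum fun c hc => ?_
        rw [← hxcol c (Finset.mem_univ c)]
        exact Finset.sum_le_sum_of_subset_of_nonneg (Finset.subset_univ S)
          (fun i _ _ => hx0 i c)
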